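/- Let n ≥ 1, let a < b, let Z = {z_j : j ∈ ℤ} be n-close on (a,b), and let F : [a,b] → ℝ be zig-zag of order n with respect to Z. Then |F(z_j) - F(z_{j+1})| ≥ 2^n · (z_{j+1} - z_j) for every j ∈ ℤ. -/
import Mathlib


open Set Filter MeasureTheory Topology
open scoped ENNReal NNReal

/-- `M_f(x,r) = sup { |f(x)-f(y)|/r : |x-y| ≤ r }`, valued in `[0,∞]`. -/
noncomputable def Mf (f : ℝ → ℝ) (x r : ℝ) : ℝ≥0∞ :=
  ⨆ y ∈ {y : ℝ | |x - y| ≤ r}, ENNReal.ofReal (|f x - f y| / r)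

/-- The big Lip function: `Lip f(x) = limsup_{r→0⁺} M_f(x,r)`. -/
noncomputable def bigLip (f : ℝ → ℝ) (x : ℝ) : ℝ≥0∞ :=
  Filter.limsup (fun r => Mf f x r) (𝓝[>] (0 : ℝ))

/-- The little lip function: `lip f(x) = liminf_{r→0⁺} M_f(x,r)`. -/
noncomputable def litLip (f : ℝ → ℝ) (x : ℝ) : ℝ≥0∞ :=
  Filter.liminf (fun r => Mf f x r) (𝓝[>] (0 : ℝ))

/-- A set `E ⊆ ℝ` is trim if `λ(E ∩ (a,b)) < b - a` for every open interval `(a,b)`. -/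
def Trim (E : Set ℝ) : Prop :=
  ∀ a b : ℝ, a < b → volume (E ∩ Ioo a b) < ENNReal.ofReal (b - a)

/-- `Φ_{n,[a,b]}(x) = 2^{-n} min(x-a, b-x)` on `[a,b]`, and `0` outside. -/
noncomputable def Phi (n : ℕ) (a b x : ℝ) : ℝ :=
  if x ∈ Icc a b then min (x - a) (b - x) / 2 ^ n else 0

/-- `Z = {z j : j ∈ ℤ}` is `n`-close on `(a,b)`. -/
def NClose (z : ℤ → ℝ) (n : ℕ) (a b : ℝ) : Prop :=
  (∀ j : ℤ, a < z j ∧ z j < z (j + 1) ∧ z (j + 1) < b) ∧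
  Tendsto z atTop (𝓝 b) ∧ Tendsto z atBot (𝓝 a) ∧
  (∀ j : ℤ, z (j + 1) - z j < min (z j - a) (b - z (j + 1)) / 4 ^ n)

/-- `F` is zig-zag of order `n` with respect to `z` on `[a,b]`. -/
def ZigZag (F : ℝ → ℝ) (z : ℤ → ℝ) (n : ℕ) (a b : ℝ) : Prop :=
  F a = F b ∧
  (∀ j : ℤ, Even j → F (z j) = F a) ∧
  (∀ j : ℤ, Odd j → F (z j) = F a + Phi n a b (z j)) ∧
  (∀ j : ℤ, ∀ x ∈ Icc (z j) (z (j + 1)),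
    F x = F (z j) + (F (z (j + 1)) - F (z j)) / (z (j + 1) - z j) * (x - z j))

/-- A zig-zag function of order `n` with respect to an `n`-close set is steep:
`|F(z_j) - F(z_{j+1})| ≥ 2^n (z_{j+1} - z_j)` for all `j`. -/
theorem zigZag_steep (n : ℕ) (hn : 1 ≤ n) (a b : ℝ) (hab : a < b)
    (z : ℤ → ℝ) (hz : NClose z n a b)
    (F : ℝ → ℝ) (hF : ZigZag F z n a b) :
    ∀ j : ℤ, 2 ^ n * (z (j + 1) - z j) ≤ |F (z j) - F (z (j + 1))| := by
  obtain ⟨hord, _, _, hclose⟩ := hz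
  obtain ⟨_, heven, hodd, _⟩ := hF
  intro j
  have h1 := hord j
  have h2 := hord (j+1)
  have hd := hclose j
  have h4 : (4:ℝ)^n = 2^n * 2^n := by rw [← mul_pow]; norm_num
  have hp : (0:ℝ) < 2^n := by positivity
  rcases Int.even_or_odd j with he | ho
  · have hzj := heven j he
    have hzj1 := hodd (j+1) (Even.add_one he)
    have hmem : z (j+1) ∈ Icc a b := ⟨le_of_lt h2.1, le_of_lt h1.2.2⟩
    have hM : min (z j - a) (b - z (j+1)) ≤ min (z (j+1) - a) (b - z (j+1)) :=
      le_min (le_trans (min_le_left _ _) (by linarith [h1.2.1])) (min_le_right _ _)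
    have hMnn : 0 ≤ min (z (j+1) - a) (b - z (j+1)) :=
      le_min (by linarith [h2.1]) (by linarith [h1.2.2])
    rw [hzj, hzj1, Phi, if_pos hmem]
    rw [show F a - (F a + min (z (j+1) - a) (b - z (j+1)) / 2 ^ n)
        = -(min (z (j+1) - a) (b - z (j+1)) / 2 ^ n) by ring, abs_neg,
      abs_of_nonneg (by positivity)]
    rw [h4, lt_div_iff₀ (by positivity)] at hd
    rw [le_div_iff₀ hp]
    nlinarith [hd, hM, hp]
  · have hzj := hodd j ho
    have hzj1 := heven (j+1) (Odd.add_one ho)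
    have hmem : z j ∈ Icc a b := ⟨le_of_lt h1.1, le_of_lt (lt_trans h1.2.1 h1.2.2)⟩
    have hM : min (z j - a) (b - z (j+1)) ≤ min (z j - a) (b - z j) :=
      le_min (min_le_left _ _) (le_trans (min_le_right _ _) (by linarith [h1.2.1]))
    have hMnn : 0 ≤ min (z j - a) (b - z j) :=
      le_min (by linarith [h1.1]) (by linarith [h1.2.1, h1.2.2])
    rw [hzj, hzj1, Phi, if_pos hmem]
    rw [show F a + min (z j - a) (b - z j) / 2 ^ n - F a
        = min (z j - a) (b - z j) / 2 ^ n by ring,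
      abs_of_nonneg (by positivity)]
    rw [h4, lt_div_iff₀ (by positivity)] at hd
    rw [le_div_iff₀ hp]
    nlinarith [hd, hM, hp]
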